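/- Let n ∈ {3,4} and let a, b, c be nonzero real numbers. Then the set {a·k_1 + b·k_2 + c·k_3 : k_1, k_2, k_3 ∈ SO(n)} has empty interior in M_n(ℝ). (This is the exceptional triple of elements all of type SU(n), with Weyl conjugate sets of annihilating roots when n = 4, in the symmetric space SO_0(n,n)/SO(n)×SO(n) with restricted root system of type D_n.) -/

import Mathlib

/- STATEMENT 17: Let n ∈ {3,4} and a, b, c nonzero reals. Then
{a·k_1 + b·k_2 + c·k_3 : k_1, k_2, k_3 ∈ SO(n)} has empty interior in M_n(ℝ). -/

open Matrix

set_option maxHeartbeats 1000000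

def U3 (r : Fin 4 → ℝ) : Matrix (Fin 3) (Fin 3) ℝ :=
  !![r 0*r 0 + r 1*r 1 - r 2*r 2 - r 3*r 3, -(2*r 0*r 3) + 2*r 1*r 2, 2*r 0*r 2 + 2*r 1*r 3;
     2*r 0*r 3 + 2*r 1*r 2, r 0*r 0 - r 1*r 1 + r 2*r 2 - r 3*r 3, -(2*r 0*r 1) + 2*r 2*r 3;
     -(2*r 0*r 2) + 2*r 1*r 3, 2*r 0*r 1 + 2*r 2*r 3, r 0*r 0 - r 1*r 1 - r 2*r 2 + r 3*r 3]

def cp (u v : Fin 3 → ℝ) : Fin 3 → ℝ :=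
  ![u 1 * v 2 - u 2 * v 1, u 2 * v 0 - u 0 * v 2, u 0 * v 1 - u 1 * v 0]

def cof (M : Matrix (Fin 3) (Fin 3) ℝ) : Matrix (Fin 3) (Fin 3) ℝ :=
  !![M 1 1*M 2 2 - M 1 2*M 2 1, M 1 2*M 2 0 - M 1 0*M 2 2, M 1 0*M 2 1 - M 1 1*M 2 0;
     M 0 2*M 2 1 - M 0 1*M 2 2, M 0 0*M 2 2 - M 0 2*M 2 0, M 0 1*M 2 0 - M 0 0*M 2 1;
     M 0 1*M 1 2 - M 0 2*M 1 1, M 0 2*M 1 0 - M 0 0*M 1 2, M 0 0*M 1 1 - M 0 1*M 1 0]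

lemma cp_mulVec (M : Matrix (Fin 3) (Fin 3) ℝ) (x y : Fin 3 → ℝ) :
    cp (M.mulVec x) (M.mulVec y) = (cof M).mulVec (cp x y) := by
  funext i
  fin_cases i <;>
    simp [cp, cof, Matrix.mulVec, dotProduct, Fin.sum_univ_three] <;> ring

lemma transpose_mul_cof (M : Matrix (Fin 3) (Fin 3) ℝ) :
    Mᵀ * cof M = M.det • 1 := by
  ext i j
  fin_cases i <;> fin_cases j <;>
    simp [cof, Matrix.mul_apply, Fin.sum_univ_three, Matrix.det_fin_three, Matrix.one_apply,
      Matrix.transpose_apply, Matrix.vecHead, Matrix.vecTail, Function.comp] <;> ring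

lemma cof_so3 {g : Matrix (Fin 3) (Fin 3) ℝ} (h1 : gᵀ * g = 1) (h1' : g * gᵀ = 1)
    (h2 : g.det = 1) : cof g = g := by
  have := transpose_mul_cof g
  rw [h2, one_smul] at this
  calc cof g = (g * gᵀ) * cof g := by rw [h1', one_mul]
  _ = g * (gᵀ * cof g) := by rw [mul_assoc]
  _ = g := by rw [this, mul_one]

lemma U3_mulVec_im (u x : Fin 3 → ℝ) :
    (U3 ![0, u 0, u 1, u 2]).mulVec x = (2 * (u ⬝ᵥ x)) • u - (u ⬝ᵥ u) • x := by
  funext i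
  fin_cases i <;>
    simp [U3, Matrix.mulVec, dotProduct, Fin.sum_univ_three] <;> ring

lemma dot_cp_left (u v : Fin 3 → ℝ) : u ⬝ᵥ cp u v = 0 := by
  simp [cp, dotProduct, Fin.sum_univ_three]; ring

lemma cp_dot_self (u v : Fin 3 → ℝ) :
    cp u v ⬝ᵥ cp u v = (u ⬝ᵥ u) * (v ⬝ᵥ v) - (u ⬝ᵥ v) ^ 2 := by
  simp [cp, dotProduct, Fin.sum_univ_three]; ring

lemma dot_self_pos {u : Fin 3 → ℝ} (hu : u ≠ 0) : 0 < u ⬝ᵥ u := by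
  have h3 : u ⬝ᵥ u = u 0 ^ 2 + u 1 ^ 2 + u 2 ^ 2 := by
    simp [dotProduct, Fin.sum_univ_three]; ring
  have : ∃ i, u i ≠ 0 := by
    by_contra h; push_neg at h; exact hu (funext h)
  obtain ⟨i, hi⟩ := this
  fin_cases i <;> rw [h3] <;> positivity

lemma so3_quat (g : Matrix (Fin 3) (Fin 3) ℝ) (h1 : gᵀ * g = 1) (h2 : g.det = 1) :
    ∃ r : Fin 4 → ℝ, (r 0 ^ 2 + r 1 ^ 2 + r 2 ^ 2 + r 3 ^ 2) ≠ 0 ∧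
      (r 0 ^ 2 + r 1 ^ 2 + r 2 ^ 2 + r 3 ^ 2) • g = U3 r := by
  have h1' : g * gᵀ = 1 := mul_eq_one_comm.mp h1
  by_cases hA : IsUnit (1 + g).det
  · -- Cayley case
    set A := 1 + g with hAdef
    set X := (1 - g) * A⁻¹ with hXdef
    have hAcomm : (1 - g) * A = A * (1 - g) := by rw [hAdef]; noncomm_ring
    have hXA : X * A = 1 - g := by
      rw [hXdef, mul_assoc, Matrix.nonsing_inv_mul A hA, mul_one]
    have hXcomm : A⁻¹ * (1 - g) = (1 - g) * A⁻¹ := by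
      have : A⁻¹ * ((1 - g) * A) * A⁻¹ = A⁻¹ * (A * (1 - g)) * A⁻¹ := by rw [hAcomm]
      rw [← mul_assoc, mul_assoc (A⁻¹ * (1 - g)), Matrix.mul_nonsing_inv A hA, mul_one,
        ← mul_assoc, Matrix.nonsing_inv_mul A hA, one_mul] at this
      exact this
    have hXg : (1 + X) * g = 1 - X := by
      have e : (1 + X) * g - (1 - X) = X * A - (1 - g) := by rw [hAdef]; noncomm_ring
      rw [hXA, sub_self] at e
      exact sub_eq_zero.mp e
    have hXt : Xᵀ = -X := by
      have hAt : Aᵀ = gᵀ * A := by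
        rw [hAdef, Matrix.transpose_add, Matrix.transpose_one, mul_add, mul_one, h1]
        abel
      have hgtinv : (gᵀ)⁻¹ = g := Matrix.inv_eq_left_inv h1'
      have e1 : Xᵀ = (Aᵀ)⁻¹ * (1 - gᵀ) := by
        rw [hXdef, Matrix.transpose_mul, Matrix.transpose_nonsing_inv,
          Matrix.transpose_sub, Matrix.transpose_one]
      have e2 : (1 : Matrix (Fin 3) (Fin 3) ℝ) - gᵀ = gᵀ * (g - 1) := by
        rw [mul_sub, h1, mul_one]
      rw [e1, hAt, Matrix.mul_inv_rev, hgtinv, e2, mul_assoc, ← mul_assoc g, h1', one_mul]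
      rw [show (g : Matrix (Fin 3) (Fin 3) ℝ) - 1 = -(1 - g) by abel, mul_neg, hXcomm,
        ← hXdef]
    have hanti : ∀ i j, X j i = - X i j := by
      intro i j
      have := congrFun (congrFun hXt i) j
      simpa [Matrix.transpose_apply, Matrix.neg_apply] using this
    set w1 := X 1 2 with hw1
    set w2 := X 2 0 with hw2
    set w3 := X 0 1 with hw3
    have hXmat : X = !![0, w3, -w2; -w3, 0, w1; w2, -w1, 0] := by
      ext i j
      fin_cases i <;> fin_cases j <;> simp <;>
        first
          | rfl
          | exact hanti 2 0
          | exact hanti 0 1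
          | exact hanti 1 2
          | linarith [hanti 0 0]
          | linarith [hanti 1 1]
          | linarith [hanti 2 2]
    set n := 1 + w1 ^ 2 + w2 ^ 2 + w3 ^ 2 with hn
    have hnpos : 0 < n := by positivity
    have hdet1X : (1 + X).det = n := by
      rw [hXmat]
      simp [Matrix.det_fin_three, Matrix.add_apply, Matrix.one_apply, Matrix.vecHead,
        Matrix.vecTail, Function.comp]
      ring
    have h1Xu : IsUnit (1 + X).det := by
      rw [hdet1X]; exact isUnit_iff_ne_zero.mpr (ne_of_gt hnpos)
    set r : Fin 4 → ℝ := ![1, w1, w2, w3] with hr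
    have hkey : (1 + X) * U3 r = n • (1 - X) := by
      rw [hXmat, hn, hr]
      ext i j
      fin_cases i <;> fin_cases j <;>
        simp [U3, Matrix.mul_apply, Fin.sum_univ_three, Matrix.add_apply, Matrix.sub_apply,
          Matrix.one_apply, Matrix.smul_apply, Matrix.vecHead, Matrix.vecTail,
          Function.comp] <;> ring
    have hfin : (1 + X) * (n • g) = (1 + X) * U3 r := by
      rw [hkey, Matrix.mul_smul, hXg]
    have hng : n • g = U3 r := by
      have := congrArg (fun M => (1 + X)⁻¹ * M) hfin
      simpa [← mul_assoc, Matrix.nonsing_inv_mul _ h1Xu, one_mul] using this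
    refine ⟨r, ?_, ?_⟩
    · have : r 0 ^ 2 + r 1 ^ 2 + r 2 ^ 2 + r 3 ^ 2 = n := by
        rw [hr, hn]; simp; try ring
      rw [this]; exact ne_of_gt hnpos
    · have hrn : r 0 ^ 2 + r 1 ^ 2 + r 2 ^ 2 + r 3 ^ 2 = n := by
        rw [hr, hn]; simp; try ring
      rw [hrn]; exact hng
  · -- π-rotation case
    have hdetA : (1 + g).det = 0 := by
      by_contra h; exact hA (isUnit_iff_ne_zero.mpr h)
    obtain ⟨v, hv0, hv⟩ := (Matrix.exists_mulVec_eq_zero_iff).mpr hdetA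
    have hgv : g.mulVec v = -v := by
      have := hv
      rw [Matrix.add_mulVec, Matrix.one_mulVec, add_comm] at this
      exact eq_neg_of_add_eq_zero_left this
    have hdetg1 : (g - 1).det = 0 := by
      have e1 : gᵀ * (g - 1) = (1 - g)ᵀ := by
        rw [mul_sub, h1, mul_one, Matrix.transpose_sub, Matrix.transpose_one]
      have e2 : (gᵀ * (g - 1)).det = (g - 1).det := by
        rw [Matrix.det_mul, Matrix.det_transpose, h2, one_mul]
      have e3 : ((1 - g)ᵀ).det = (1 - g).det := Matrix.det_transpose _
      have e4 : (1 - g : Matrix (Fin 3) (Fin 3) ℝ) = -(g - 1) := by abel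
      have e5 : ((1 : Matrix (Fin 3) (Fin 3) ℝ) - g).det = -(g - 1).det := by
        rw [e4, Matrix.det_neg]
        norm_num
      have : (g - 1).det = -(g - 1).det := by
        calc (g - 1).det = (gᵀ * (g - 1)).det := e2.symm
          _ = ((1 - g)ᵀ).det := by rw [e1]
          _ = (1 - g).det := e3
          _ = -(g - 1).det := e5
      linarith
    obtain ⟨u, hu0, hu⟩ := (Matrix.exists_mulVec_eq_zero_iff).mpr hdetg1
    have hgu : g.mulVec u = u := by
      have := hu
      rw [Matrix.sub_mulVec, Matrix.one_mulVec, sub_eq_zero] at this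
      exact this
    have hdot : ∀ x y : Fin 3 → ℝ, g.mulVec x ⬝ᵥ g.mulVec y = x ⬝ᵥ y := by
      intro x y
      rw [dotProduct_mulVec]
      have : Matrix.vecMul (g.mulVec x) g = x := by
        rw [← Matrix.vecMul_transpose, Matrix.vecMul_vecMul, h1, Matrix.vecMul_one]
      rw [this]
    have hdotuv : u ⬝ᵥ v = 0 := by
      have := hdot u v
      rw [hgu, hgv, dotProduct_neg] at this
      linarith
    set t := cp u v with ht
    have hgt : g.mulVec t = -t := by
      have e1 := cp_mulVec g u v
      rw [hgu, hgv] at e1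
      have e2 : cp u (-v) = -cp u v := by
        funext i; fin_cases i <;> simp [cp] <;> ring
      rw [e2, cof_so3 h1 h1' h2] at e1
      rw [← ht] at e1
      exact e1.symm
    have hdotut : u ⬝ᵥ t = 0 := dot_cp_left u v
    set nn := u ⬝ᵥ u with hnn
    have hnnpos : 0 < nn := dot_self_pos hu0
    set r : Fin 4 → ℝ := ![0, u 0, u 1, u 2] with hr
    set G := nn • g - U3 r with hG
    have hGu : G.mulVec u = 0 := by
      rw [hG, Matrix.sub_mulVec, Matrix.smul_mulVec, hgu, hr, U3_mulVec_im]
      rw [← hnn]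
      funext i
      simp [Pi.sub_apply, Pi.smul_apply, smul_eq_mul]
      try ring
    have hGv : G.mulVec v = 0 := by
      rw [hG, Matrix.sub_mulVec, Matrix.smul_mulVec, hgv, hr, U3_mulVec_im, hdotuv]
      rw [← hnn]
      funext i
      simp [Pi.sub_apply, Pi.smul_apply, smul_eq_mul]
      try ring
    have hGt : G.mulVec t = 0 := by
      rw [hG, Matrix.sub_mulVec, Matrix.smul_mulVec, hgt, hr, U3_mulVec_im, hdotut]
      rw [← hnn]
      funext i
      simp [Pi.sub_apply, Pi.smul_apply, smul_eq_mul]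
      try ring
    set B : Matrix (Fin 3) (Fin 3) ℝ := Matrix.of ![u, v, t] with hB
    have hdetB : B.det = t ⬝ᵥ t := by
      rw [hB, ht]
      simp [Matrix.det_fin_three, cp, dotProduct, Fin.sum_univ_three]
      ring
    have htt : 0 < t ⬝ᵥ t := by
      rw [ht, cp_dot_self, hdotuv]
      have := dot_self_pos hv0
      nlinarith [hnnpos]
    have hBdet : IsUnit (Bᵀ).det := by
      rw [Matrix.det_transpose, hdetB]
      exact isUnit_iff_ne_zero.mpr (ne_of_gt htt)
    have hGB : G * Bᵀ = 0 := by
      ext i j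
      rw [Matrix.mul_apply]
      have key : ∀ x : Fin 3 → ℝ, G.mulVec x = 0 → (∑ k, G i k * x k) = 0 := by
        intro x hx
        have := congrFun hx i
        rwa [Matrix.mulVec, dotProduct] at this
      fin_cases j
      · exact key u hGu
      · exact key v hGv
      · exact key t hGt
    have hG0 : G = 0 := by
      calc G = G * (Bᵀ * (Bᵀ)⁻¹) := by rw [Matrix.mul_nonsing_inv _ hBdet, mul_one]
        _ = (G * Bᵀ) * (Bᵀ)⁻¹ := by rw [mul_assoc]
        _ = 0 := by rw [hGB, zero_mul]
    refine ⟨r, ?_, ?_⟩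
    · have : r 0 ^ 2 + r 1 ^ 2 + r 2 ^ 2 + r 3 ^ 2 = nn := by
        rw [hr, hnn]
        simp [dotProduct, Fin.sum_univ_three]
        ring
      rw [this]; exact ne_of_gt hnnpos
    · have hrn : r 0 ^ 2 + r 1 ^ 2 + r 2 ^ 2 + r 3 ^ 2 = nn := by
        rw [hr, hnn]
        simp [dotProduct, Fin.sum_univ_three]
        ring
      rw [hrn]
      have h0 : nn • g - U3 r = 0 := by rw [← hG]; exact hG0
      exact sub_eq_zero.mp h0

def qm (p q : Fin 4 → ℝ) : Fin 4 → ℝ :=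
  ![p 0 * q 0 - p 1 * q 1 - p 2 * q 2 - p 3 * q 3,
    p 0 * q 1 + p 1 * q 0 + p 2 * q 3 - p 3 * q 2,
    p 0 * q 2 - p 1 * q 3 + p 2 * q 0 + p 3 * q 1,
    p 0 * q 3 + p 1 * q 2 - p 2 * q 1 + p 3 * q 0]

def qc (p : Fin 4 → ℝ) : Fin 4 → ℝ := ![p 0, -p 1, -p 2, -p 3]

def Lm (p : Fin 4 → ℝ) : Matrix (Fin 4) (Fin 4) ℝ :=
  !![p 0, -p 1, -p 2, -p 3;
     p 1, p 0, -p 3, p 2;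
     p 2, p 3, p 0, -p 1;
     p 3, -p 2, p 1, p 0]

def Rm (q : Fin 4 → ℝ) : Matrix (Fin 4) (Fin 4) ℝ :=
  !![q 0, -q 1, -q 2, -q 3;
     q 1, q 0, q 3, -q 2;
     q 2, -q 3, q 0, q 1;
     q 3, q 2, -q 1, q 0]

lemma Lm_mul_Lm (p q : Fin 4 → ℝ) : Lm p * Lm q = Lm (qm p q) := by
  ext i j
  fin_cases i <;> fin_cases j <;>
    simp [Lm, qm, Matrix.mul_apply, Fin.sum_univ_four, Matrix.vecHead, Matrix.vecTail,
      Function.comp] <;> ring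

lemma Lm_transpose_mul (p : Fin 4 → ℝ) :
    (Lm p)ᵀ * Lm p = (p 0 ^ 2 + p 1 ^ 2 + p 2 ^ 2 + p 3 ^ 2) • (1 : Matrix (Fin 4) (Fin 4) ℝ) := by
  ext i j
  fin_cases i <;> fin_cases j <;>
    simp [Lm, Matrix.mul_apply, Fin.sum_univ_four, Matrix.one_apply, Matrix.transpose_apply,
      Matrix.vecHead, Matrix.vecTail, Function.comp] <;> ring

lemma Lm_qc_mul (p : Fin 4 → ℝ) :
    Lm (qc p) * Lm p = (p 0 ^ 2 + p 1 ^ 2 + p 2 ^ 2 + p 3 ^ 2) • (1 : Matrix (Fin 4) (Fin 4) ℝ) := by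
  ext i j
  fin_cases i <;> fin_cases j <;>
    simp [Lm, qc, Matrix.mul_apply, Fin.sum_univ_four, Matrix.one_apply,
      Matrix.vecHead, Matrix.vecTail, Function.comp] <;> ring

lemma Lm_mul_qc (p : Fin 4 → ℝ) :
    Lm p * Lm (qc p) = (p 0 ^ 2 + p 1 ^ 2 + p 2 ^ 2 + p 3 ^ 2) • (1 : Matrix (Fin 4) (Fin 4) ℝ) := by
  ext i j
  fin_cases i <;> fin_cases j <;>
    simp [Lm, qc, Matrix.mul_apply, Fin.sum_univ_four, Matrix.one_apply,
      Matrix.vecHead, Matrix.vecTail, Function.comp] <;> ring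

lemma det_Lm (p : Fin 4 → ℝ) :
    (Lm p).det = (p 0 ^ 2 + p 1 ^ 2 + p 2 ^ 2 + p 3 ^ 2) ^ 2 := by
  simp [Lm, Matrix.det_succ_row_zero, Fin.sum_univ_succ, Fin.succAbove,
    Fin.castSucc, Fin.castAdd, Fin.castLE, Matrix.vecHead, Matrix.vecTail, Function.comp]
  ring

lemma so4_quat (k : Matrix (Fin 4) (Fin 4) ℝ) (h1 : kᵀ * k = 1) (h2 : k.det = 1) :
    ∃ (p q : Fin 4 → ℝ) (cc : ℝ), cc ≠ 0 ∧ cc • k = Lm p * Rm q := by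
  set u : Fin 4 → ℝ := fun i => k i 0 with hu
  have huu : u 0 ^ 2 + u 1 ^ 2 + u 2 ^ 2 + u 3 ^ 2 = 1 := by
    have h00 := congrFun (congrFun h1 0) 0
    simp [Matrix.mul_apply, Fin.sum_univ_four, Matrix.one_apply, Matrix.transpose_apply] at h00
    rw [hu]
    simp only []
    linear_combination h00
  have hcusq : (qc u) 0 ^ 2 + (qc u) 1 ^ 2 + (qc u) 2 ^ 2 + (qc u) 3 ^ 2 = 1 := by
    simp [qc]; linear_combination huu
  have hLcuLu : Lm (qc u) * Lm u = 1 := by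
    rw [Lm_qc_mul, huu, one_smul]
  have hLuLcu : Lm u * Lm (qc u) = 1 := by
    rw [Lm_mul_qc, huu, one_smul]
  set f := Lm (qc u) * k with hf
  have hLt : (Lm (qc u))ᵀ * Lm (qc u) = 1 := by
    rw [Lm_transpose_mul, hcusq, one_smul]
  have hftf : fᵀ * f = 1 := by
    rw [hf, Matrix.transpose_mul, mul_assoc, ← mul_assoc (Lm (qc u))ᵀ, hLt, one_mul, h1]
  have hdetf : f.det = 1 := by
    rw [hf, Matrix.det_mul, det_Lm, h2, mul_one, hcusq, one_pow]
  have hcol : ∀ i, f i 0 = (1 : Matrix (Fin 4) (Fin 4) ℝ) i 0 := by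
    intro i
    rw [hf]
    fin_cases i <;>
      simp [Lm, qc, hu, Matrix.mul_apply, Fin.sum_univ_four, Matrix.one_apply] <;>
      first
        | linear_combination huu
        | ring
  have hrow : ∀ j, f 0 j = (1 : Matrix (Fin 4) (Fin 4) ℝ) 0 j := by
    intro j
    have h00 := congrFun (congrFun hftf 0) j
    rw [Matrix.mul_apply, Fin.sum_univ_four] at h00
    simp only [Matrix.transpose_apply] at h00
    rw [hcol 0, hcol 1, hcol 2, hcol 3] at h00
    simpa [Matrix.one_apply] using h00
  have hf00 : f 0 0 = 1 := by simpa using hrow 0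
  have hf01 : f 0 1 = 0 := by simpa using hrow 1
  have hf02 : f 0 2 = 0 := by simpa using hrow 2
  have hf03 : f 0 3 = 0 := by simpa using hrow 3
  have hf10 : f 1 0 = 0 := by simpa using hcol 1
  have hf20 : f 2 0 = 0 := by simpa using hcol 2
  have hf30 : f 3 0 = 0 := by simpa using hcol 3
  set g3 : Matrix (Fin 3) (Fin 3) ℝ := Matrix.of fun i j => f i.succ j.succ with hg3
  have hg3t : g3ᵀ * g3 = 1 := by
    ext i j
    have h4 := congrFun (congrFun hftf i.succ) j.succ
    rw [Matrix.mul_apply, Fin.sum_univ_succ] at h4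
    simp only [Matrix.transpose_apply] at h4
    rw [hrow (i.succ)] at h4
    have hz : (1 : Matrix (Fin 4) (Fin 4) ℝ) 0 i.succ = 0 := by
      simp [Matrix.one_apply, (Fin.succ_ne_zero i).symm]
    rw [hz, zero_mul, zero_add] at h4
    have h5 : (1 : Matrix (Fin 4) (Fin 4) ℝ) i.succ j.succ = (1 : Matrix (Fin 3) (Fin 3) ℝ) i j := by
      simp [Matrix.one_apply, Fin.succ_inj]
    rw [h5] at h4
    rw [Matrix.mul_apply]
    simpa [Matrix.transpose_apply, hg3] using h4
  have hsub : f.submatrix Fin.succ ((0 : Fin 4).succAbove) = g3 := by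
    ext i j
    simp [Matrix.submatrix_apply, Fin.succAbove_zero, hg3]
  have hdetg3 : g3.det = 1 := by
    rw [Matrix.det_succ_row_zero, Fin.sum_univ_four] at hdetf
    rw [hf00, hf01, hf02, hf03] at hdetf
    rw [Fin.succAbove_zero] at hsub
    simpa [hsub] using hdetf
  obtain ⟨r, hr0, hrg⟩ := so3_quat g3 hg3t hdetg3
  set n := r 0 ^ 2 + r 1 ^ 2 + r 2 ^ 2 + r 3 ^ 2 with hn
  have hnf : n • f = Lm r * Rm (qc r) := by
    ext i j
    fin_cases i <;> fin_cases j
    · show n * f 0 0 = (Lm r * Rm (qc r)) 0 0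
      rw [hf00]
      simp [Lm, Rm, qc, Matrix.mul_apply, Fin.sum_univ_four, Matrix.vecHead, Matrix.vecTail, Function.comp]
      ring
    · show n * f 0 1 = (Lm r * Rm (qc r)) 0 1
      rw [hf01]
      simp [Lm, Rm, qc, Matrix.mul_apply, Fin.sum_univ_four, Matrix.vecHead, Matrix.vecTail, Function.comp]
      ring
    · show n * f 0 2 = (Lm r * Rm (qc r)) 0 2
      rw [hf02]
      simp [Lm, Rm, qc, Matrix.mul_apply, Fin.sum_univ_four, Matrix.vecHead, Matrix.vecTail, Function.comp]
      ring
    · show n * f 0 3 = (Lm r * Rm (qc r)) 0 3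
      rw [hf03]
      simp [Lm, Rm, qc, Matrix.mul_apply, Fin.sum_univ_four, Matrix.vecHead, Matrix.vecTail, Function.comp]
      ring
    · show n * f 1 0 = (Lm r * Rm (qc r)) 1 0
      rw [hf10]
      simp [Lm, Rm, qc, Matrix.mul_apply, Fin.sum_univ_four, Matrix.vecHead, Matrix.vecTail, Function.comp]
      ring
    · show n * f 1 1 = (Lm r * Rm (qc r)) 1 1
      have hb : n * g3 0 0 = U3 r 0 0 := by
        simpa using congrFun (congrFun hrg 0) 0
      have hfg : f 1 1 = g3 0 0 := rfl
      rw [hfg, hb]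
      simp [U3, Lm, Rm, qc, Matrix.mul_apply, Fin.sum_univ_four, Matrix.vecHead, Matrix.vecTail, Function.comp]
      ring
    · show n * f 1 2 = (Lm r * Rm (qc r)) 1 2
      have hb : n * g3 0 1 = U3 r 0 1 := by
        simpa using congrFun (congrFun hrg 0) 1
      have hfg : f 1 2 = g3 0 1 := rfl
      rw [hfg, hb]
      simp [U3, Lm, Rm, qc, Matrix.mul_apply, Fin.sum_univ_four, Matrix.vecHead, Matrix.vecTail, Function.comp]
      ring
    · show n * f 1 3 = (Lm r * Rm (qc r)) 1 3
      have hb : n * g3 0 2 = U3 r 0 2 := by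
        simpa using congrFun (congrFun hrg 0) 2
      have hfg : f 1 3 = g3 0 2 := rfl
      rw [hfg, hb]
      simp [U3, Lm, Rm, qc, Matrix.mul_apply, Fin.sum_univ_four, Matrix.vecHead, Matrix.vecTail, Function.comp]
      ring
    · show n * f 2 0 = (Lm r * Rm (qc r)) 2 0
      rw [hf20]
      simp [Lm, Rm, qc, Matrix.mul_apply, Fin.sum_univ_four, Matrix.vecHead, Matrix.vecTail, Function.comp]
      ring
    · show n * f 2 1 = (Lm r * Rm (qc r)) 2 1
      have hb : n * g3 1 0 = U3 r 1 0 := by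
        simpa using congrFun (congrFun hrg 1) 0
      have hfg : f 2 1 = g3 1 0 := rfl
      rw [hfg, hb]
      simp [U3, Lm, Rm, qc, Matrix.mul_apply, Fin.sum_univ_four, Matrix.vecHead, Matrix.vecTail, Function.comp]
      ring
    · show n * f 2 2 = (Lm r * Rm (qc r)) 2 2
      have hb : n * g3 1 1 = U3 r 1 1 := by
        simpa using congrFun (congrFun hrg 1) 1
      have hfg : f 2 2 = g3 1 1 := rfl
      rw [hfg, hb]
      simp [U3, Lm, Rm, qc, Matrix.mul_apply, Fin.sum_univ_four, Matrix.vecHead, Matrix.vecTail, Function.comp]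
      ring
    · show n * f 2 3 = (Lm r * Rm (qc r)) 2 3
      have hb : n * g3 1 2 = U3 r 1 2 := by
        simpa using congrFun (congrFun hrg 1) 2
      have hfg : f 2 3 = g3 1 2 := rfl
      rw [hfg, hb]
      simp [U3, Lm, Rm, qc, Matrix.mul_apply, Fin.sum_univ_four, Matrix.vecHead, Matrix.vecTail, Function.comp]
      ring
    · show n * f 3 0 = (Lm r * Rm (qc r)) 3 0
      rw [hf30]
      simp [Lm, Rm, qc, Matrix.mul_apply, Fin.sum_univ_four, Matrix.vecHead, Matrix.vecTail, Function.comp]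
      ring
    · show n * f 3 1 = (Lm r * Rm (qc r)) 3 1
      have hb : n * g3 2 0 = U3 r 2 0 := by
        simpa using congrFun (congrFun hrg 2) 0
      have hfg : f 3 1 = g3 2 0 := rfl
      rw [hfg, hb]
      simp [U3, Lm, Rm, qc, Matrix.mul_apply, Fin.sum_univ_four, Matrix.vecHead, Matrix.vecTail, Function.comp]
      ring
    · show n * f 3 2 = (Lm r * Rm (qc r)) 3 2
      have hb : n * g3 2 1 = U3 r 2 1 := by
        simpa using congrFun (congrFun hrg 2) 1
      have hfg : f 3 2 = g3 2 1 := rfl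
      rw [hfg, hb]
      simp [U3, Lm, Rm, qc, Matrix.mul_apply, Fin.sum_univ_four, Matrix.vecHead, Matrix.vecTail, Function.comp]
      ring
    · show n * f 3 3 = (Lm r * Rm (qc r)) 3 3
      have hb : n * g3 2 2 = U3 r 2 2 := by
        simpa using congrFun (congrFun hrg 2) 2
      have hfg : f 3 3 = g3 2 2 := rfl
      rw [hfg, hb]
      simp [U3, Lm, Rm, qc, Matrix.mul_apply, Fin.sum_univ_four, Matrix.vecHead, Matrix.vecTail, Function.comp]
      ring
  have hk : Lm u * f = k := by
    rw [hf, ← mul_assoc, hLuLcu, one_mul]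
  refine ⟨qm u r, qc r, n, hr0, ?_⟩
  calc n • k = Lm u * (n • f) := by rw [← hk, Matrix.mul_smul]
    _ = Lm u * (Lm r * Rm (qc r)) := by rw [hnf]
    _ = (Lm u * Lm r) * Rm (qc r) := by rw [mul_assoc]
    _ = Lm (qm u r) * Rm (qc r) := by rw [Lm_mul_Lm]

set_option maxHeartbeats 4000000

noncomputable def Phi (Z : Matrix (Fin 4) (Fin 4) ℝ) : Matrix (Fin 4) (Fin 4) ℝ :=
  !![ (Z 0 0 + Z 1 1 + Z 2 2 + Z 3 3)/4, (-Z 0 1 + Z 1 0 + Z 2 3 - Z 3 2)/4,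
      (-Z 0 2 - Z 1 3 + Z 2 0 + Z 3 1)/4, (-Z 0 3 + Z 1 2 - Z 2 1 + Z 3 0)/4;
      (-Z 0 1 + Z 1 0 - Z 2 3 + Z 3 2)/4, (-Z 0 0 - Z 1 1 + Z 2 2 + Z 3 3)/4,
      (Z 0 3 - Z 1 2 - Z 2 1 + Z 3 0)/4, (-Z 0 2 - Z 1 3 - Z 2 0 - Z 3 1)/4;
      (-Z 0 2 + Z 1 3 + Z 2 0 - Z 3 1)/4, (-Z 0 3 - Z 1 2 - Z 2 1 - Z 3 0)/4,
      (-Z 0 0 + Z 1 1 - Z 2 2 + Z 3 3)/4, (Z 0 1 + Z 1 0 - Z 2 3 - Z 3 2)/4;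
      (-Z 0 3 - Z 1 2 + Z 2 1 + Z 3 0)/4, (Z 0 2 - Z 1 3 + Z 2 0 - Z 3 1)/4,
      (-Z 0 1 - Z 1 0 - Z 2 3 - Z 3 2)/4, (-Z 0 0 + Z 1 1 + Z 2 2 - Z 3 3)/4]

lemma Phi_LR (p q : Fin 4 → ℝ) :
    Phi (Lm p * Rm q) = Matrix.of fun i j => p i * q j := by
  ext i j
  fin_cases i <;> fin_cases j <;>
    simp [Phi, Lm, Rm, Matrix.mul_apply, Fin.sum_univ_four, Matrix.vecHead, Matrix.vecTail,
      Function.comp] <;> ring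

lemma Phi_comb (x y z : ℝ) (A B C : Matrix (Fin 4) (Fin 4) ℝ) :
    Phi (x • A + y • B + z • C) = x • Phi A + y • Phi B + z • Phi C := by
  ext i j
  fin_cases i <;> fin_cases j <;>
    simp [Phi, Matrix.add_apply, Matrix.smul_apply, Matrix.vecHead, Matrix.vecTail,
      Function.comp] <;> ring

lemma Phi_add (A B : Matrix (Fin 4) (Fin 4) ℝ) : Phi (A + B) = Phi A + Phi B := by
  ext i j
  fin_cases i <;> fin_cases j <;>
    simp [Phi, Matrix.add_apply, Matrix.vecHead, Matrix.vecTail, Function.comp] <;> ring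

lemma Phi_smul (x : ℝ) (A : Matrix (Fin 4) (Fin 4) ℝ) : Phi (x • A) = x • Phi A := by
  ext i j
  fin_cases i <;> fin_cases j <;>
    simp [Phi, Matrix.smul_apply, Matrix.vecHead, Matrix.vecTail, Function.comp] <;> ring

lemma Phi_one : Phi (!![(-2:ℝ),0,0,0;0,2,0,0;0,0,2,0;0,0,0,2]) = 1 := by
  ext i j
  fin_cases i <;> fin_cases j <;>
    simp [Phi, Matrix.one_apply, Matrix.vecHead, Matrix.vecTail, Function.comp] <;> norm_num

/-- The key algebraic constraint: for `Z` a combination of three special orthogonal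
matrices, `Phi Z` is a sum of three rank-one matrices, hence has zero determinant. -/
lemma det_Phi_sum (a b c : ℝ) (k₁ k₂ k₃ : Matrix (Fin 4) (Fin 4) ℝ)
    (h1t : k₁ᵀ * k₁ = 1) (h1d : k₁.det = 1) (h2t : k₂ᵀ * k₂ = 1) (h2d : k₂.det = 1)
    (h3t : k₃ᵀ * k₃ = 1) (h3d : k₃.det = 1) :
    (Phi (a • k₁ + b • k₂ + c • k₃)).det = 0 := by
  obtain ⟨p₁, q₁, c₁, hc₁, he₁⟩ := so4_quat k₁ h1t h1d
  obtain ⟨p₂, q₂, c₂, hc₂, he₂⟩ := so4_quat k₂ h2t h2d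
  obtain ⟨p₃, q₃, c₃, hc₃, he₃⟩ := so4_quat k₃ h3t h3d
  have hp1 : Phi k₁ = c₁⁻¹ • Matrix.of (fun i j => p₁ i * q₁ j) := by
    have h := congrArg Phi he₁
    rw [Phi_smul, Phi_LR] at h
    rw [← h, smul_smul, inv_mul_cancel₀ hc₁, one_smul]
  have hp2 : Phi k₂ = c₂⁻¹ • Matrix.of (fun i j => p₂ i * q₂ j) := by
    have h := congrArg Phi he₂
    rw [Phi_smul, Phi_LR] at h
    rw [← h, smul_smul, inv_mul_cancel₀ hc₂, one_smul]
  have hp3 : Phi k₃ = c₃⁻¹ • Matrix.of (fun i j => p₃ i * q₃ j) := by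
    have h := congrArg Phi he₃
    rw [Phi_smul, Phi_LR] at h
    rw [← h, smul_smul, inv_mul_cancel₀ hc₃, one_smul]
  set U : Matrix (Fin 4) (Fin 4) ℝ := Matrix.of fun i s =>
    if s = 0 then a * c₁⁻¹ * p₁ i else if s = 1 then b * c₂⁻¹ * p₂ i
      else if s = 2 then c * c₃⁻¹ * p₃ i else 0 with hU
  set V : Matrix (Fin 4) (Fin 4) ℝ := Matrix.of fun s j =>
    if s = 0 then q₁ j else if s = 1 then q₂ j else if s = 2 then q₃ j else 0 with hV
  have hUV : Phi (a • k₁ + b • k₂ + c • k₃) = U * V := by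
    rw [Phi_comb, hp1, hp2, hp3]
    ext i j
    simp [hU, hV, Matrix.mul_apply, Fin.sum_univ_four, Matrix.smul_apply, Matrix.add_apply]
    ring
  have hUdet : U.det = 0 := by
    apply Matrix.det_eq_zero_of_column_eq_zero 3
    intro i
    simp [hU]
  rw [hUV, Matrix.det_mul, hUdet, zero_mul]

/-- Embedding of a 3×3 matrix into a 4×4 matrix with prescribed corner. -/
noncomputable def emb (s : ℝ) (W : Matrix (Fin 3) (Fin 3) ℝ) : Matrix (Fin 4) (Fin 4) ℝ :=
  Matrix.of fun i j =>
    if hi : i = 0 then (if j = 0 then s else 0)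
    else if hj : j = 0 then 0 else W (i.pred hi) (j.pred hj)

lemma emb_succ_succ (s : ℝ) (W : Matrix (Fin 3) (Fin 3) ℝ) (i j : Fin 3) :
    emb s W i.succ j.succ = W i j := by
  simp [emb, Fin.succ_ne_zero, Fin.pred_succ]

lemma emb_zero_row (s : ℝ) (W : Matrix (Fin 3) (Fin 3) ℝ) (j : Fin 4) :
    emb s W 0 j = if j = 0 then s else 0 := by simp [emb]

lemma emb_col (s : ℝ) (W : Matrix (Fin 3) (Fin 3) ℝ) (i : Fin 4) :
    emb s W i 0 = if i = 0 then s else 0 := by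
  by_cases hi : i = 0 <;> simp [emb, hi]

lemma emb_so (w : Matrix (Fin 3) (Fin 3) ℝ) (hw : wᵀ * w = 1) :
    (emb 1 w)ᵀ * (emb 1 w) = 1 := by
  ext i j
  rw [Matrix.mul_apply, Fin.sum_univ_succ]
  simp only [Matrix.transpose_apply]
  rcases Fin.eq_zero_or_eq_succ i with rfl | ⟨i', rfl⟩ <;>
    rcases Fin.eq_zero_or_eq_succ j with rfl | ⟨j', rfl⟩
  · simp [emb_zero_row, emb_col, Matrix.one_apply, Fin.succ_ne_zero]
  · simp [emb_zero_row, emb_col, emb_succ_succ, Matrix.one_apply, (Fin.succ_ne_zero j').symm,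
      Fin.succ_ne_zero]
  · simp [emb_zero_row, emb_col, emb_succ_succ, Matrix.one_apply, (Fin.succ_ne_zero i').symm,
      Fin.succ_ne_zero]
  · have h := congrFun (congrFun hw i') j'
    rw [Matrix.mul_apply] at h
    simp only [Matrix.transpose_apply] at h
    have e0 : emb 1 w 0 i'.succ = 0 := by
      simp [emb_zero_row, Fin.succ_ne_zero]
    rw [e0, zero_mul, zero_add]
    have e1 : ∑ a : Fin 3, emb 1 w a.succ i'.succ * emb 1 w a.succ j'.succ
        = ∑ a : Fin 3, w a i' * w a j' :=
      Finset.sum_congr rfl (fun a _ => by rw [emb_succ_succ, emb_succ_succ])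
    rw [e1, h]
    by_cases hij : i' = j' <;> simp [Matrix.one_apply, hij, Fin.succ_inj]
lemma emb_det (w : Matrix (Fin 3) (Fin 3) ℝ) : (emb 1 w).det = w.det := by
  rw [Matrix.det_succ_row_zero, Fin.sum_univ_four]
  have h0 : emb 1 w 0 0 = 1 := by simp [emb_zero_row]
  have h1 : emb 1 w 0 1 = 0 := by simp [emb_zero_row]
  have h2 : emb 1 w 0 2 = 0 := by simp [emb_zero_row]
  have h3 : emb 1 w 0 3 = 0 := by simp [emb_zero_row]
  rw [h0, h1, h2, h3]
  have hsub : (emb 1 w).submatrix Fin.succ Fin.succ = w := by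
    ext i j
    simp [Matrix.submatrix_apply, emb_succ_succ]
  simp [Fin.succAbove_zero, hsub]

lemma emb_comb (a b c : ℝ) (w₁ w₂ w₃ : Matrix (Fin 3) (Fin 3) ℝ) :
    emb (a + b + c) (a • w₁ + b • w₂ + c • w₃) =
      a • emb 1 w₁ + b • emb 1 w₂ + c • emb 1 w₃ := by
  ext i j
  by_cases hi : i = 0
  · subst hi
    by_cases hj : j = 0 <;>
      simp [emb, hj, Matrix.add_apply, Matrix.smul_apply]
  · by_cases hj : j = 0 <;>
      simp [emb, hi, hj, Matrix.add_apply, Matrix.smul_apply]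

lemma emb_affine (s t : ℝ) (Z : Matrix (Fin 3) (Fin 3) ℝ) :
    emb s (Z + t • 1) = emb s Z + t • emb 0 1 := by
  ext i j
  by_cases hi : i = 0
  · subst hi
    by_cases hj : j = 0 <;>
      simp [emb, hj, Matrix.add_apply, Matrix.smul_apply]
  · by_cases hj : j = 0 <;>
      simp [emb, hi, hj, Matrix.add_apply, Matrix.smul_apply, Matrix.one_apply]

lemma det_add_smul_one {m : ℕ} (A : Matrix (Fin m) (Fin m) ℝ) (t : ℝ) :
    (A + t • 1).det = ((-A).charpoly).eval t := by
  have h1 : ((-A).charpoly).eval t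
      = ((Matrix.charmatrix (-A)).map (Polynomial.evalRingHom t)).det := by
    unfold Matrix.charpoly
    have h := RingHom.map_det (Polynomial.evalRingHom t) (Matrix.charmatrix (-A))
    rw [RingHom.mapMatrix_apply] at h
    exact h
  have h2 : (Matrix.charmatrix (-A)).map (Polynomial.evalRingHom t) = A + t • 1 := by
    ext i j
    by_cases h : i = j
    · subst h
      simp [Matrix.charmatrix_apply_eq, Matrix.map_apply, Matrix.add_apply,
        Matrix.smul_apply, Matrix.one_apply]
      ring
    · simp [Matrix.charmatrix_apply_ne _ _ _ h, Matrix.map_apply, Matrix.add_apply,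
        Matrix.smul_apply, Matrix.one_apply, h]
  rw [h1, h2]


theorem exceptional_triple_SUn_empty_interior
    (n : ℕ) (hn : n = 3 ∨ n = 4) (a b c : ℝ) (ha : a ≠ 0) (hb : b ≠ 0) (hc : c ≠ 0) :
    interior {Z : Matrix (Fin n) (Fin n) ℝ |
        ∃ k₁ k₂ k₃ : Matrix (Fin n) (Fin n) ℝ,
          k₁ᵀ * k₁ = 1 ∧ k₁.det = 1 ∧ k₂ᵀ * k₂ = 1 ∧ k₂.det = 1 ∧
          k₃ᵀ * k₃ = 1 ∧ k₃.det = 1 ∧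
          Z = a • k₁ + b • k₂ + c • k₃} = ∅ := by
  rcases hn with rfl | rfl
  · -- n = 3
    rw [Set.eq_empty_iff_forall_notMem]
    intro Z hZ
    have hγ : Continuous fun t : ℝ => Z + t • (1 : Matrix (Fin 3) (Fin 3) ℝ) :=
      continuous_const.add (continuous_id.smul continuous_const)
    have hmem0 : (fun t : ℝ => Z + t • (1 : Matrix (Fin 3) (Fin 3) ℝ)) 0 ∈
        interior {Z : Matrix (Fin 3) (Fin 3) ℝ |
          ∃ k₁ k₂ k₃ : Matrix (Fin 3) (Fin 3) ℝ,
            k₁ᵀ * k₁ = 1 ∧ k₁.det = 1 ∧ k₂ᵀ * k₂ = 1 ∧ k₂.det = 1 ∧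
            k₃ᵀ * k₃ = 1 ∧ k₃.det = 1 ∧
            Z = a • k₁ + b • k₂ + c • k₃} := by
      simpa using hZ
    have hnb := (isOpen_interior.preimage hγ).mem_nhds hmem0
    obtain ⟨δ, hδpos, hδ⟩ := Metric.mem_nhds_iff.mp hnb
    set A := Phi (emb (a + b + c) Z) with hA
    set M0 := Phi (emb 0 1) with hM0
    have hM0eq : M0 = !![(3:ℝ)/4,0,0,0; 0,1/4,0,0; 0,0,1/4,0; 0,0,0,1/4] := by
      rw [hM0]
      ext i j
      fin_cases i <;> fin_cases j <;>
        simp [Phi, emb, Matrix.one_apply] <;> norm_num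
    set N : Matrix (Fin 4) (Fin 4) ℝ := !![(4:ℝ)/3,0,0,0; 0,4,0,0; 0,0,4,0; 0,0,0,4] with hN
    have hM0N : M0 * N = 1 := by
      rw [hM0eq, hN]
      ext i j
      fin_cases i <;> fin_cases j <;>
        simp [Matrix.mul_apply, Fin.sum_univ_four, Matrix.one_apply, Matrix.vecHead,
          Matrix.vecTail, Function.comp] <;> norm_num
    have hdetM0 : M0.det ≠ 0 := by
      intro h0
      have h := congrArg Matrix.det hM0N
      rw [Matrix.det_mul, Matrix.det_one, h0, zero_mul] at h
      norm_num at h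
    set p := Matrix.charpoly (-(N * A)) with hp
    have hpne : p ≠ 0 := (Matrix.charpoly_monic _).ne_zero
    have hroots := Polynomial.finite_setOf_isRoot hpne
    have hinf : (Set.Ioo (0:ℝ) δ).Infinite := Set.Ioo_infinite hδpos
    obtain ⟨t, htI, htr⟩ := (hinf.diff hroots).nonempty
    have htball : t ∈ Metric.ball (0:ℝ) δ := by
      rw [Metric.mem_ball, Real.dist_eq, sub_zero, abs_of_pos htI.1]
      exact htI.2
    have hmem : Z + t • (1 : Matrix (Fin 3) (Fin 3) ℝ) ∈
        {Z : Matrix (Fin 3) (Fin 3) ℝ |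
          ∃ k₁ k₂ k₃ : Matrix (Fin 3) (Fin 3) ℝ,
            k₁ᵀ * k₁ = 1 ∧ k₁.det = 1 ∧ k₂ᵀ * k₂ = 1 ∧ k₂.det = 1 ∧
            k₃ᵀ * k₃ = 1 ∧ k₃.det = 1 ∧
            Z = a • k₁ + b • k₂ + c • k₃} :=
      interior_subset (hδ htball)
    obtain ⟨k₁, k₂, k₃, h1t, h1d, h2t, h2d, h3t, h3d, hsum⟩ := hmem
    have h0 : (Phi (emb (a + b + c) (Z + t • 1))).det = 0 := by
      rw [hsum, emb_comb]
      exact det_Phi_sum a b c _ _ _ (emb_so k₁ h1t) (by rw [emb_det]; exact h1d)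
        (emb_so k₂ h2t) (by rw [emb_det]; exact h2d)
        (emb_so k₃ h3t) (by rw [emb_det]; exact h3d)
    have h1 : Phi (emb (a + b + c) (Z + t • 1)) = A + t • M0 := by
      rw [emb_affine, Phi_add, Phi_smul]
    have h2 : A + t • M0 = M0 * (N * A + t • 1) := by
      rw [mul_add, ← mul_assoc, hM0N, one_mul, Matrix.mul_smul, mul_one]
    have h3 : (N * A + t • 1).det = p.eval t := by
      rw [det_add_smul_one]
    have h4 : M0.det * p.eval t = 0 := by
      rw [← h3, ← Matrix.det_mul, ← h2, ← h1, h0]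
    have hpt : Polynomial.IsRoot p t := by
      rcases mul_eq_zero.mp h4 with h | h
      · exact absurd h hdetM0
      · exact h
    exact htr hpt
  · -- n = 4
    rw [Set.eq_empty_iff_forall_notMem]
    intro Z hZ
    set W : Matrix (Fin 4) (Fin 4) ℝ := !![(-2:ℝ),0,0,0;0,2,0,0;0,0,2,0;0,0,0,2] with hW
    have hγ : Continuous fun t : ℝ => Z + t • W :=
      continuous_const.add (continuous_id.smul continuous_const)
    have hmem0 : (fun t : ℝ => Z + t • W) 0 ∈
        interior {Z : Matrix (Fin 4) (Fin 4) ℝ |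
          ∃ k₁ k₂ k₃ : Matrix (Fin 4) (Fin 4) ℝ,
            k₁ᵀ * k₁ = 1 ∧ k₁.det = 1 ∧ k₂ᵀ * k₂ = 1 ∧ k₂.det = 1 ∧
            k₃ᵀ * k₃ = 1 ∧ k₃.det = 1 ∧
            Z = a • k₁ + b • k₂ + c • k₃} := by
      simpa using hZ
    have hnb := (isOpen_interior.preimage hγ).mem_nhds hmem0
    obtain ⟨δ, hδpos, hδ⟩ := Metric.mem_nhds_iff.mp hnb
    set p := Matrix.charpoly (-(Phi Z)) with hp
    have hpne : p ≠ 0 := (Matrix.charpoly_monic _).ne_zero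
    have hroots := Polynomial.finite_setOf_isRoot hpne
    have hinf : (Set.Ioo (0:ℝ) δ).Infinite := Set.Ioo_infinite hδpos
    obtain ⟨t, htI, htr⟩ := (hinf.diff hroots).nonempty
    have htball : t ∈ Metric.ball (0:ℝ) δ := by
      rw [Metric.mem_ball, Real.dist_eq, sub_zero, abs_of_pos htI.1]
      exact htI.2
    have hmem : Z + t • W ∈
        {Z : Matrix (Fin 4) (Fin 4) ℝ |
          ∃ k₁ k₂ k₃ : Matrix (Fin 4) (Fin 4) ℝ,
            k₁ᵀ * k₁ = 1 ∧ k₁.det = 1 ∧ k₂ᵀ * k₂ = 1 ∧ k₂.det = 1 ∧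
            k₃ᵀ * k₃ = 1 ∧ k₃.det = 1 ∧
            Z = a • k₁ + b • k₂ + c • k₃} :=
      interior_subset (hδ htball)
    obtain ⟨k₁, k₂, k₃, h1t, h1d, h2t, h2d, h3t, h3d, hsum⟩ := hmem
    have h0 : (Phi (Z + t • W)).det = 0 := by
      rw [hsum]
      exact det_Phi_sum a b c _ _ _ h1t h1d h2t h2d h3t h3d
    have h1 : Phi (Z + t • W) = Phi Z + t • 1 := by
      rw [Phi_add, Phi_smul, hW, Phi_one]
    have h3 : (Phi Z + t • 1).det = p.eval t := by
      rw [det_add_smul_one]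
    have hpt : Polynomial.IsRoot p t := by
      have := h0
      rw [h1, h3] at this
      exact this
    exact htr hpt
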